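/- Consider the Markov chain (p_t) on {0, 1/K, …, 1} (K even) with p₀ = 1/2, where given p_{t−1} = q, p_t = q + 1/K with probability q(1−q), p_t = q − 1/K with probability q(1−q), and p_t = q otherwise. Let T = min{t : p_t ∈ {0, 1}}. Then E[T] ≤ 4K²·√(1/2), i.e., E[T] = O(K²). -/

import Mathlib

open MeasureTheory ProbabilityTheory
open scoped ENNReal


-- sqrt concavity gap lemma
lemma g_lb (q h : ℝ) (hh : 0 < h) (hq : h ≤ q) :
    Real.sqrt (q+h) + Real.sqrt (q-h) + h^2/(4*q*Real.sqrt q) ≤ 2*Real.sqrt q := by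
  have hq0 : 0 < q := lt_of_lt_of_le hh hq
  set a := Real.sqrt (q+h) with ha
  set b := Real.sqrt (q-h) with hb
  set s := Real.sqrt q with hs
  have ha0 : 0 ≤ a := Real.sqrt_nonneg _
  have hb0 : 0 ≤ b := Real.sqrt_nonneg _
  have hs0 : 0 < s := Real.sqrt_pos.mpr hq0
  have ha2 : a^2 = q + h := Real.sq_sqrt (by linarith)
  have hb2 : b^2 = q - h := Real.sq_sqrt (by linarith)
  have hs2 : s^2 = q := Real.sq_sqrt (le_of_lt hq0)
  -- ab ≤ q - h^2/(2q), i.e. 2q*ab ≤ 2q^2 - h^2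
  have hab : 2*q*(a*b) ≤ 2*q^2 - h^2 := by
    have h1 : (2*q*(a*b))^2 ≤ (2*q^2 - h^2)^2 := by
      have : (a*b)^2 = q^2 - h^2 := by rw [mul_pow, ha2, hb2]; ring
      nlinarith [sq_nonneg h, sq_nonneg (h^2), this]
    have h2 : 0 ≤ 2*q^2 - h^2 := by nlinarith
    nlinarith [mul_nonneg (mul_nonneg (by linarith : (0:ℝ) ≤ 2*q) ha0) hb0]
  -- (a+b)^2 ≤ 4q - h^2/q, then a+b ≤ 2s - h^2/(4qs)
  have key : a + b ≤ 2*s - h^2/(4*q*s) := by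
    have hsum2 : (a+b)^2 ≤ 4*q - h^2/q := by
      have : (a+b)^2 = 2*q + 2*(a*b) := by nlinarith [ha2, hb2]
      rw [this, ← sub_nonneg]
      have : 4*q - h^2/q - (2*q + 2*(a*b)) = (2*q^2 - h^2 - 2*q*(a*b))/q := by
        field_simp; ring
      rw [this]
      apply div_nonneg (by linarith) (le_of_lt hq0)
    have hpos : 0 ≤ 2*s - h^2/(4*q*s) := by
      rw [sub_nonneg, div_le_iff₀ (by positivity)]
      nlinarith
    have : (a+b)^2 ≤ (2*s - h^2/(4*q*s))^2 := by
      have hs0' : s ≠ 0 := ne_of_gt hs0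
      have hexp : (2*s - h^2/(4*(s^2)*s))^2 = 4*(s^2) - h^2/(s^2) + (h^2/(4*(s^2)*s))^2 := by
        field_simp; ring
      rw [hs2] at hexp
      rw [hexp]
      nlinarith [sq_nonneg (h^2/(4*q*s))]
    nlinarith [sq_nonneg (a+b-(2*s - h^2/(4*q*s)))]
  have : 0 < 4*q*s := by positivity
  linarith [key]

lemma poly_ineq (s : ℝ) (h0 : 0 < s) (h1 : 2*s^2 ≤ 1) :
    1 ≤ (1-s^2)*(4*s^2 + 1/(2*s)) := by
  rw [← sub_nonneg]
  have key : (1-s^2)*(4*s^2 + 1/(2*s)) - 1 = (-8*s^5 + 8*s^3 - s^2 - 2*s + 1)/(2*s) := by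
    field_simp; ring
  rw [key]
  apply div_nonneg _ (by linarith)
  nlinarith [sq_nonneg (s - 1/2), sq_nonneg s, mul_pos h0 h0, sq_nonneg (s*(s-1/2))]

-- drift inequality for q < 1/2
lemma drift_lt_half (q h : ℝ) (hh : 0 < h) (hq1 : h ≤ q) (hq2 : q + h ≤ 1/2) :
    1 ≤ 4*q*(1-q) + (2/h^2) * (q*(1-q)) *
      (2*Real.sqrt q - Real.sqrt (q+h) - Real.sqrt (q-h)) := by
  have hq0 : 0 < q := lt_of_lt_of_le hh hq1
  have hs0 : 0 < Real.sqrt q := Real.sqrt_pos.mpr hq0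
  have hgap := g_lb q h hh hq1
  have hr : 0 < q*(1-q) := mul_pos hq0 (by linarith)
  have h2 : (2/h^2) * (q*(1-q)) * (2*Real.sqrt q - Real.sqrt (q+h) - Real.sqrt (q-h))
      ≥ (2/h^2) * (q*(1-q)) * (h^2/(4*q*Real.sqrt q)) := by
    apply mul_le_mul_of_nonneg_left (by linarith) (by positivity)
  have h3 : (2/h^2) * (q*(1-q)) * (h^2/(4*q*Real.sqrt q)) = (1-q)/(2*Real.sqrt q) := by
    field_simp; ring
  rw [h3] at h2
  set s := Real.sqrt q with hs
  have hs2 : s^2 = q := Real.sq_sqrt (le_of_lt hq0)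
  have hss : 2*s^2 ≤ 1 := by rw [hs2]; linarith
  have := poly_ineq s hs0 hss
  have he : (1-s^2)*(4*s^2 + 1/(2*s)) = 4*q*(1-q) + (1-q)/(2*s) := by
    rw [hs2]; field_simp
  rw [he] at this
  linarith

noncomputable def Vf (K : ℕ) (x : ℝ) : ℝ :=
  2*(K:ℝ)^2*(x*(1-x) + Real.sqrt (min x (1-x)))

lemma Vf_nonneg (K : ℕ) (x : ℝ) (h0 : 0 ≤ x) (h1 : x ≤ 1) : 0 ≤ Vf K x := by
  unfold Vf
  have := Real.sqrt_nonneg (min x (1-x))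
  have h2 : (0:ℝ) ≤ x*(1-x) := mul_nonneg h0 (by linarith)
  positivity

lemma drift_pt (K j : ℕ) (hK : 0 < K) (hE : Even K) (hj0 : 0 < j) (hjK : j < K) :
    ((j:ℝ)/K*(1-(j:ℝ)/K))*(Vf K ((j:ℝ)/K+1/K)) + ((j:ℝ)/K*(1-(j:ℝ)/K))*(Vf K ((j:ℝ)/K-1/K))
      + (1-2*((j:ℝ)/K*(1-(j:ℝ)/K)))*(Vf K ((j:ℝ)/K)) + 1 ≤ Vf K ((j:ℝ)/K) := by
  have hK0 : (0:ℝ) < K := by exact_mod_cast hK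
  set q : ℝ := (j:ℝ)/K with hqdef
  set h : ℝ := 1/(K:ℝ) with hhdef
  have hh0 : 0 < h := by positivity
  have hq0 : 0 < q := by positivity
  have hhq : h ≤ q := by
    rw [hqdef, hhdef, div_le_div_iff₀ hK0 hK0]
    have : (1:ℝ) ≤ (j:ℝ) := by exact_mod_cast hj0
    nlinarith
  have hq1 : q ≤ 1 - h := by
    rw [hqdef, hhdef]
    have : (j:ℝ) ≤ (K:ℝ) - 1 := by
      have : (j:ℝ) + 1 ≤ (K:ℝ) := by exact_mod_cast hjK
      linarith
    rw [div_le_iff₀ hK0]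
    have hexp : (1 - 1/(K:ℝ))*K = K - 1 := by field_simp
    rw [hexp]; linarith
  have hq1' : q ≤ 1 := by linarith
  have hKh : (K:ℝ)*h = 1 := by rw [hhdef]; field_simp
  -- reduce to 1 ≤ 4*q*(1-q) + 2*K^2*(q*(1-q))*g̃
  have main : 1 ≤ 4*q*(1-q) + 2*(K:ℝ)^2*(q*(1-q)) *
      (2*Real.sqrt (min q (1-q)) - Real.sqrt (min (q+h) (1-(q+h))) - Real.sqrt (min (q-h) (1-(q-h)))) := by
    rcases lt_trichotomy (2*j) K with hc | hc | hc
    · -- q + h ≤ 1/2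
      have h2j : 2*(j+1) ≤ K := by
        rcases hE with ⟨k, hk⟩
        omega
      have hqh : q + h ≤ 1/2 := by
        rw [hqdef, hhdef, ← add_div, div_le_iff₀ hK0]
        have : ((j:ℝ)+1)*2 ≤ (K:ℝ) := by exact_mod_cast (by omega : (j+1)*2 ≤ K)
        push_cast
        linarith
      have m1 : min q (1-q) = q := min_eq_left (by linarith)
      have m2 : min (q+h) (1-(q+h)) = q+h := min_eq_left (by linarith)
      have m3 : min (q-h) (1-(q-h)) = q-h := min_eq_left (by linarith)
      rw [m1, m2, m3]
      have := drift_lt_half q h hh0 hhq hqh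
      have he : (2/h^2) = 2*(K:ℝ)^2 := by
        rw [hhdef]; field_simp
      rw [he] at this
      linarith
    · -- q = 1/2
      have hqhalf : q = 1/2 := by
        rw [hqdef, div_eq_iff (ne_of_gt hK0)]
        have : ((2*j:ℕ):ℝ) = (K:ℝ) := by exact_mod_cast hc
        push_cast at this
        linarith
      have hh12 : h ≤ 1/2 := by linarith
      have m1 : min q (1-q) = q := min_eq_left (by linarith)
      have m2 : min (q+h) (1-(q+h)) = q-h := by
        rw [hqhalf]; rw [min_eq_right (by linarith)]; ring
      have m3 : min (q-h) (1-(q-h)) = q-h := by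
        rw [hqhalf, min_eq_left (by linarith)]
      rw [m1, m2, m3]
      have hsle : Real.sqrt (q-h) ≤ Real.sqrt q := Real.sqrt_le_sqrt (by linarith)
      have hr : (0:ℝ) ≤ 2*(K:ℝ)^2*(q*(1-q)) := by
        have : (0:ℝ) ≤ q*(1-q) := mul_nonneg (le_of_lt hq0) (by linarith)
        positivity
      have : 0 ≤ 2*(K:ℝ)^2*(q*(1-q)) * (2*Real.sqrt q - Real.sqrt (q-h) - Real.sqrt (q-h)) := by
        apply mul_nonneg hr
        linarith
      rw [hqhalf] at this ⊢
      nlinarith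
    · -- q - h ≥ 1/2 : symmetric case
      have h2j : 2*(j-1) ≥ K := by
        rcases hE with ⟨k, hk⟩
        omega
      have hqh : q - h ≥ 1/2 := by
        rw [hqdef, hhdef, div_sub_div_same, ge_iff_le, le_div_iff₀ hK0]
        have : (K:ℝ) ≤ ((j:ℝ)-1)*2 := by
          have : ((2*(j-1):ℕ):ℝ) ≥ (K:ℝ) := by exact_mod_cast h2j
          push_cast [Nat.cast_sub (by omega : 1 ≤ j)] at this
          linarith
        linarith
      set q' : ℝ := 1 - q with hq'def
      have m1 : min q (1-q) = q' := min_eq_right (by linarith)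
      have m2 : min (q+h) (1-(q+h)) = q'-h := by
        rw [min_eq_right (by linarith)]; rw [hq'def]; ring
      have m3 : min (q-h) (1-(q-h)) = q'+h := by
        rw [min_eq_right (by linarith)]; rw [hq'def]; ring
      rw [m1, m2, m3]
      have hhq' : h ≤ q' := by rw [hq'def]; linarith
      have hqh' : q' + h ≤ 1/2 := by rw [hq'def]; linarith
      have := drift_lt_half q' h hh0 hhq' hqh'
      have he : (2/h^2) = 2*(K:ℝ)^2 := by
        rw [hhdef]; field_simp
      rw [he] at this
      have hqq' : q*(1-q) = q'*(1-q') := by rw [hq'def]; ring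
      have h4 : 4*q*(1-q) = 4*q'*(1-q') := by rw [hq'def]; ring
      rw [hqq', h4]
      linarith
  -- expand Vf and conclude
  have hK2h2 : (K:ℝ)^2*h^2 = 1 := by
    rw [hhdef]; field_simp
  have key : 1 ≤ (q*(1-q))*(2*(Vf K q) - Vf K (q+h) - Vf K (q-h)) := by
    unfold Vf
    have hid : (q*(1-q))*(2*(2*(K:ℝ)^2*(q*(1-q) + Real.sqrt (min q (1-q))))
        - 2*(K:ℝ)^2*((q+h)*(1-(q+h)) + Real.sqrt (min (q+h) (1-(q+h))))
        - 2*(K:ℝ)^2*((q-h)*(1-(q-h)) + Real.sqrt (min (q-h) (1-(q-h)))))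
        = 4*(q*(1-q))*((K:ℝ)^2*h^2) + 2*(K:ℝ)^2*(q*(1-q))*(2*Real.sqrt (min q (1-q))
            - Real.sqrt (min (q+h) (1-(q+h))) - Real.sqrt (min (q-h) (1-(q-h)))) := by
      ring
    rw [hid, hK2h2]
    linarith [main]
  nlinarith [key]


/-- Upper bound on the expected absorption time of the cGA neutral-bit frequency
process: the Markov chain `(p_t)` on `{0, 1/K, …, 1}` starts at `1/2` and, given
`p_{t−1} = q`, moves to `q + 1/K` with probability `q(1−q)`, to `q − 1/K` with
probability `q(1−q)`, and stays at `q` otherwise. The hitting time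
`T = min{t : p_t ∈ {0,1}}` satisfies `E[T] ≤ 4K²·√(1/2)`. -/
theorem cga_neutral_absorption_time (K : ℕ) (hK : 0 < K) (hKeven : Even K)
    {Ω : Type*} [MeasurableSpace Ω] (μ : Measure Ω) [IsProbabilityMeasure μ]
    (p : ℕ → Ω → ℝ) (hmeas : ∀ t, Measurable (p t))
    (h0 : ∀ ω, p 0 ω = 1/2)
    (hgrid : ∀ t ω, ∃ j : ℕ, j ≤ K ∧ p t ω = (j : ℝ) / K)
    (hup : ∀ t : ℕ, ∀ q : ℝ,
      μ {ω | p (t+1) ω = q + 1/K ∧ p t ω = q}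
        = ENNReal.ofReal (q * (1 - q)) * μ {ω | p t ω = q})
    (hdown : ∀ t : ℕ, ∀ q : ℝ,
      μ {ω | p (t+1) ω = q - 1/K ∧ p t ω = q}
        = ENNReal.ofReal (q * (1 - q)) * μ {ω | p t ω = q})
    (hstay : ∀ t : ℕ, ∀ q : ℝ,
      μ {ω | p (t+1) ω = q ∧ p t ω = q}
        = (1 - 2 * ENNReal.ofReal (q * (1 - q))) * μ {ω | p t ω = q})
    (T : Ω → ℝ≥0∞)
    (hT : ∀ ω, T ω = sInf {t : ℝ≥0∞ | ∃ n : ℕ, t = n ∧ (p n ω = 0 ∨ p n ω = 1)}) :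
    ∫⁻ ω, T ω ∂μ ≤ ENNReal.ofReal (4 * (K : ℝ) ^ 2 * Real.sqrt (1/2)) := by
  have hK0 : (0:ℝ) < K := by exact_mod_cast hK
  have hKne : (K:ℝ) ≠ 0 := ne_of_gt hK0
  -- basic objects
  set E : ℕ → ℕ → Set Ω := fun t j => {ω | p t ω = (j:ℝ)/K} with hE
  set S : ℕ → ℕ → ℕ → Set Ω := fun t j i => {ω | p (t+1) ω = (i:ℝ)/K ∧ p t ω = (j:ℝ)/K} with hS
  set u : ℕ → ℕ → ℝ≥0∞ := fun t j => μ (E t j) with hu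
  set Vq : ℕ → ℝ≥0∞ := fun j => ENNReal.ofReal (Vf K ((j:ℝ)/K)) with hVq
  set F : ℕ → ℝ≥0∞ := fun t => ∑ j ∈ Finset.range (K+1), Vq j * u t j with hF
  set B : ℕ → Set Ω := fun t => {ω | p t ω = 0 ∨ p t ω = 1}ᶜ with hB
  have hcastinj : ∀ i i' : ℕ, (i:ℝ)/K = (i':ℝ)/K → i = i' := by
    intro i i' hii
    have : (i:ℝ) = (i':ℝ) := by
      field_simp at hii; exact_mod_cast hii
    exact_mod_cast this
  have hEmeas : ∀ t j, MeasurableSet (E t j) := by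
    intro t j
    exact (hmeas t) (measurableSet_singleton _)
  have hSmeas : ∀ t j i, MeasurableSet (S t j i) := by
    intro t j i
    have : S t j i = (p (t+1) ⁻¹' {(i:ℝ)/K}) ∩ (p t ⁻¹' {(j:ℝ)/K}) := rfl
    rw [this]
    exact ((hmeas (t+1)) (measurableSet_singleton _)).inter ((hmeas t) (measurableSet_singleton _))
  have hBmeas : ∀ t, MeasurableSet (B t) := by
    intro t
    have : B t = ((p t ⁻¹' {0}) ∪ (p t ⁻¹' {1}))ᶜ := rfl
    rw [this]
    exact (((hmeas t) (measurableSet_singleton _)).union ((hmeas t) (measurableSet_singleton _))).compl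
  -- decomposition of E t j along time t+1 values
  have hdecompE : ∀ t j, u t j = ∑ i ∈ Finset.range (K+1), μ (S t j i) := by
    intro t j
    have hcover : E t j = ⋃ i ∈ Finset.range (K+1), S t j i := by
      ext ω
      constructor
      · intro hω
        obtain ⟨i, hi, hpi⟩ := hgrid (t+1) ω
        exact Set.mem_biUnion (Finset.mem_range.mpr (Nat.lt_succ_of_le hi)) ⟨hpi, hω⟩
      · rintro ⟨_, ⟨i, rfl⟩, _, ⟨hi, rfl⟩, hωi⟩
        exact hωi.2
    rw [hu]
    simp only
    rw [hcover, measure_biUnion_finset]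
    · intro i hi i' hi' hne
      simp only [Function.onFun, Set.disjoint_left]
      intro ω hω hω'
      exact hne (hcastinj i i' (hω.1.symm.trans hω'.1))
    · exact fun i _ => hSmeas t j i
  -- decomposition of E (t+1) i along time t values
  have hdecomp2 : ∀ t i, u (t+1) i = ∑ j ∈ Finset.range (K+1), μ (S t j i) := by
    intro t i
    have hcover : E (t+1) i = ⋃ j ∈ Finset.range (K+1), S t j i := by
      ext ω
      constructor
      · intro hω
        obtain ⟨j, hj, hpj⟩ := hgrid t ω
        exact Set.mem_biUnion (Finset.mem_range.mpr (Nat.lt_succ_of_le hj)) ⟨hω, hpj⟩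
      · rintro ⟨_, ⟨j, rfl⟩, _, ⟨hj, rfl⟩, hωj⟩
        exact hωj.1
    rw [hu]
    simp only
    rw [hcover, measure_biUnion_finset]
    · intro j hj j' hj' hne
      simp only [Function.onFun, Set.disjoint_left]
      intro ω hω hω'
      exact hne (hcastinj j j' (hω.2.symm.trans hω'.2))
    · exact fun j _ => hSmeas t j i
  -- transition measure values
  have hru : ∀ j : ℕ, 0 ≤ ((j:ℝ)/K)*(1-(j:ℝ)/K) → True := fun _ _ => trivial
  have hupS : ∀ t j : ℕ, μ (S t j (j+1)) = ENNReal.ofReal (((j:ℝ)/K)*(1-(j:ℝ)/K)) * u t j := by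
    intro t j
    have hc : ((j:ℝ))/K + 1/K = ((j+1:ℕ):ℝ)/K := by push_cast; ring
    have := hup t ((j:ℝ)/K)
    rw [hc] at this
    exact this
  have hdownS : ∀ t j : ℕ, 1 ≤ j → μ (S t j (j-1)) = ENNReal.ofReal (((j:ℝ)/K)*(1-(j:ℝ)/K)) * u t j := by
    intro t j hj
    have hc : ((j:ℝ))/K - 1/K = ((j-1:ℕ):ℝ)/K := by
      rw [Nat.cast_sub hj]; push_cast; ring
    have := hdown t ((j:ℝ)/K)
    rw [hc] at this
    exact this
  have hstayS : ∀ t j : ℕ, μ (S t j j) = (1 - 2 * ENNReal.ofReal (((j:ℝ)/K)*(1-(j:ℝ)/K))) * u t j := by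
    intro t j
    exact hstay t ((j:ℝ)/K)
  -- bounds on q and r
  have hq01 : ∀ j : ℕ, j ≤ K → 0 ≤ (j:ℝ)/K ∧ (j:ℝ)/K ≤ 1 := by
    intro j hj
    constructor
    · positivity
    · rw [div_le_one hK0]; exact_mod_cast hj
  have hr14 : ∀ j : ℕ, j ≤ K → 2*(((j:ℝ)/K)*(1-(j:ℝ)/K)) ≤ 1 := by
    intro j hj
    obtain ⟨h1, h2⟩ := hq01 j hj
    nlinarith [sq_nonneg ((j:ℝ)/K - 1/2)]
  have hufin : ∀ t j, u t j ≠ ⊤ := fun t j => measure_ne_top μ _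
  -- sum of the three designated transitions equals u t j
  have hthree : ∀ t j : ℕ, 1 ≤ j → j < K →
      μ (S t j (j-1)) + μ (S t j j) + μ (S t j (j+1)) = u t j := by
    intro t j hj1 hjK
    rw [hupS, hdownS t j hj1, hstayS]
    set a := ENNReal.ofReal (((j:ℝ)/K)*(1-(j:ℝ)/K)) with ha
    have h2a : 2*a ≤ 1 := by
      rw [ha, ← ENNReal.ofReal_ofNat, ← ENNReal.ofReal_mul (by norm_num), ← ENNReal.ofReal_one]
      exact ENNReal.ofReal_le_ofReal (hr14 j (le_of_lt hjK))
    calc a * u t j + (1 - 2*a) * u t j + a * u t j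
        = (a + (1-2*a) + a) * u t j := by ring
      _ = u t j := by
          rw [show a + (1-2*a) + a = (1-2*a) + 2*a by ring, tsub_add_cancel_of_le h2a, one_mul]
  -- transitions outside {j-1,j,j+1} are null
  have hcancel : ∀ a b : ℝ≥0∞, b ≠ ⊤ → a + b = b → a = 0 := by
    intro a b hb hab
    have : a + b = 0 + b := by rw [hab, zero_add]
    exact (ENNReal.add_left_inj hb).mp this
  have hrest : ∀ t j, 1 ≤ j → j < K → ∀ i ∈ Finset.range (K+1),
      i ∉ ({j-1, j, j+1} : Finset ℕ) → μ (S t j i) = 0 := by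
    intro t j hj1 hjK i hi hi3
    have hsub : ({j-1, j, j+1} : Finset ℕ) ⊆ Finset.range (K+1) := by
      intro x hx
      simp only [Finset.mem_insert, Finset.mem_singleton] at hx
      rcases hx with rfl | rfl | rfl <;> (rw [Finset.mem_range]; omega)
    have hsplit := Finset.sum_sdiff (f := fun i => μ (S t j i)) hsub
    have hs3 : ∑ i ∈ ({j-1, j, j+1} : Finset ℕ), μ (S t j i) = u t j := by
      rw [show ({j-1, j, j+1} : Finset ℕ) = insert (j-1) (insert j {j+1}) from rfl]
      rw [Finset.sum_insert (by simp only [Finset.mem_insert, Finset.mem_singleton]; omega),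
        Finset.sum_insert (by simp only [Finset.mem_singleton]; omega), Finset.sum_singleton]
      rw [← add_assoc]
      exact hthree t j hj1 hjK
    rw [hs3, ← hdecompE t j] at hsplit
    have hz := hcancel _ _ (hufin t j) hsplit
    have := (Finset.sum_eq_zero_iff.mp hz) i (Finset.mem_sdiff.mpr ⟨hi, hi3⟩)
    exact this
  have hrest0 : ∀ t, ∀ i ∈ Finset.range (K+1), i ≠ 0 → μ (S t 0 i) = 0 := by
    intro t i hi hi0
    have hsub : ({0} : Finset ℕ) ⊆ Finset.range (K+1) := by
      intro x hx; simp only [Finset.mem_singleton] at hx; subst hx; simp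
    have hsplit := Finset.sum_sdiff (f := fun i => μ (S t 0 i)) hsub
    have hs0 : ∑ i ∈ ({0} : Finset ℕ), μ (S t 0 i) = u t 0 := by
      rw [Finset.sum_singleton]
      have := hstayS t 0
      simp only [Nat.cast_zero, zero_div, zero_mul, ENNReal.ofReal_zero, mul_zero,
        tsub_zero, one_mul] at this
      exact this
    rw [hs0, ← hdecompE t 0] at hsplit
    have hz := hcancel _ _ (hufin t 0) hsplit
    exact (Finset.sum_eq_zero_iff.mp hz) i (Finset.mem_sdiff.mpr ⟨hi, by simpa⟩)
  have hrestK : ∀ t, ∀ i ∈ Finset.range (K+1), i ≠ K → μ (S t K i) = 0 := by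
    intro t i hi hiK
    have hsub : ({K} : Finset ℕ) ⊆ Finset.range (K+1) := by
      intro x hx; simp only [Finset.mem_singleton] at hx; subst hx; simp
    have hsplit := Finset.sum_sdiff (f := fun i => μ (S t K i)) hsub
    have hsK : ∑ i ∈ ({K} : Finset ℕ), μ (S t K i) = u t K := by
      rw [Finset.sum_singleton]
      have := hstayS t K
      rw [div_self hKne] at this
      simp only [sub_self, mul_zero, ENNReal.ofReal_zero, tsub_zero, one_mul] at this
      exact this
    rw [hsK, ← hdecompE t K] at hsplit
    have hz := hcancel _ _ (hufin t K) hsplit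
    exact (Finset.sum_eq_zero_iff.mp hz) i (Finset.mem_sdiff.mpr ⟨hi, by simpa⟩)
  -- nonnegativity facts
  have hVfnn : ∀ i : ℕ, i ≤ K → 0 ≤ Vf K ((i:ℝ)/K) := by
    intro i hi
    obtain ⟨h1, h2⟩ := hq01 i hi
    exact Vf_nonneg K _ h1 h2
  -- the one-step drift inequality, per starting grid point j
  have hstep : ∀ t j, j ∈ Finset.range (K+1) →
      (∑ i ∈ Finset.range (K+1), Vq i * μ (S t j i))
        + (if 1 ≤ j ∧ j < K then u t j else 0) ≤ Vq j * u t j := by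
    intro t j hjmem
    have hjK : j ≤ K := Nat.lt_succ_iff.mp (Finset.mem_range.mp hjmem)
    by_cases hjint : 1 ≤ j ∧ j < K
    · obtain ⟨hj1, hjK'⟩ := hjint
      rw [if_pos ⟨hj1, hjK'⟩]
      have hsub : ({j-1, j, j+1} : Finset ℕ) ⊆ Finset.range (K+1) := by
        intro x hx
        simp only [Finset.mem_insert, Finset.mem_singleton] at hx
        rcases hx with rfl | rfl | rfl <;> (rw [Finset.mem_range]; omega)
      have hsplit := Finset.sum_sdiff (f := fun i => Vq i * μ (S t j i)) hsub
      have hzero : ∑ i ∈ Finset.range (K+1) \ ({j-1, j, j+1} : Finset ℕ),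
          Vq i * μ (S t j i) = 0 := by
        apply Finset.sum_eq_zero
        intro i hi
        rw [Finset.mem_sdiff] at hi
        rw [hrest t j hj1 hjK' i hi.1 hi.2, mul_zero]
      have hs3 : ∑ i ∈ ({j-1, j, j+1} : Finset ℕ), Vq i * μ (S t j i)
          = Vq (j-1) * μ (S t j (j-1)) + Vq j * μ (S t j j) + Vq (j+1) * μ (S t j (j+1)) := by
        rw [show ({j-1, j, j+1} : Finset ℕ) = insert (j-1) (insert j {j+1}) from rfl]
        rw [Finset.sum_insert (by simp only [Finset.mem_insert, Finset.mem_singleton]; omega),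
          Finset.sum_insert (by simp only [Finset.mem_singleton]; omega), Finset.sum_singleton]
        ring
      rw [← hsplit, hzero, zero_add, hs3]
      -- now compute with the transition probabilities
      rw [hupS, hdownS t j hj1, hstayS]
      set q : ℝ := (j:ℝ)/K with hq
      set r : ℝ := q*(1-q) with hr
      obtain ⟨hq0, hq1⟩ := hq01 j hjK
      have hrnn : 0 ≤ r := mul_nonneg hq0 (by linarith)
      have hr2 : 2*r ≤ 1 := hr14 j hjK
      have hstaycoef : (1 : ℝ≥0∞) - 2 * ENNReal.ofReal r = ENNReal.ofReal (1 - 2*r) := by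
        rw [ENNReal.ofReal_sub _ (by linarith), ENNReal.ofReal_one,
          ENNReal.ofReal_mul (by norm_num : (0:ℝ) ≤ 2), ENNReal.ofReal_ofNat]
      have hcp : ((j+1:ℕ):ℝ)/K = q + 1/K := by push_cast; ring
      have hcm : ((j-1:ℕ):ℝ)/K = q - 1/K := by
        rw [Nat.cast_sub hj1]; push_cast; ring
      have hVfp : 0 ≤ Vf K (q + 1/K) := by rw [← hcp]; exact hVfnn (j+1) (by omega)
      have hVfm : 0 ≤ Vf K (q - 1/K) := by rw [← hcm]; exact hVfnn (j-1) (by omega)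
      have hVf0 : 0 ≤ Vf K q := hVfnn j hjK
      have hdrift := drift_pt K j hK hKeven hj1 hjK'
      rw [← hq] at hdrift
      rw [← hr] at hdrift
      rw [hVq]
      simp only [hcp, hcm]
      rw [hstaycoef]
      have e1 : ENNReal.ofReal (Vf K (q - 1/(K:ℝ))) * (ENNReal.ofReal r * u t j)
          = ENNReal.ofReal (Vf K (q - 1/(K:ℝ)) * r) * u t j := by
        rw [← mul_assoc, ← ENNReal.ofReal_mul hVfm]
      have e2 : ENNReal.ofReal (Vf K q) * (ENNReal.ofReal (1 - 2*r) * u t j)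
          = ENNReal.ofReal (Vf K q * (1 - 2*r)) * u t j := by
        rw [← mul_assoc, ← ENNReal.ofReal_mul hVf0]
      have e3 : ENNReal.ofReal (Vf K (q + 1/(K:ℝ))) * (ENNReal.ofReal r * u t j)
          = ENNReal.ofReal (Vf K (q + 1/(K:ℝ)) * r) * u t j := by
        rw [← mul_assoc, ← ENNReal.ofReal_mul hVfp]
      rw [e1, e2, e3]
      calc ENNReal.ofReal (Vf K (q - 1/K) * r) * u t j
            + ENNReal.ofReal (Vf K q * (1 - 2*r)) * u t j
            + ENNReal.ofReal (Vf K (q + 1/K) * r) * u t j + u t j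
          = ENNReal.ofReal (Vf K (q - 1/K) * r + Vf K q * (1 - 2*r)
              + Vf K (q + 1/K) * r + 1) * u t j := by
            have A1 : 0 ≤ Vf K (q - 1/(K:ℝ)) * r := mul_nonneg hVfm hrnn
            have A2 : 0 ≤ Vf K q * (1 - 2*r) := mul_nonneg hVf0 (by linarith)
            have A3 : 0 ≤ Vf K (q + 1/(K:ℝ)) * r := mul_nonneg hVfp hrnn
            rw [ENNReal.ofReal_add (by linarith) (by norm_num : (0:ℝ) ≤ 1),
              ENNReal.ofReal_add (by linarith) A3,
              ENNReal.ofReal_add A1 A2, ENNReal.ofReal_one]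
            ring
        _ ≤ ENNReal.ofReal (Vf K q) * u t j := by
            apply mul_le_mul_left
            apply ENNReal.ofReal_le_ofReal
            linarith [hdrift]
    · -- boundary cases j = 0 or j = K
      rw [if_neg hjint, add_zero]
      have hj0K : j = 0 ∨ j = K := by omega
      have hVq0 : Vq 0 = 0 := by
        rw [hVq]
        simp only [Nat.cast_zero, zero_div]
        unfold Vf
        rw [min_eq_left (by norm_num : (0:ℝ) ≤ 1 - 0)]
        simp
      have hVqK : Vq K = 0 := by
        rw [hVq]
        simp only [div_self hKne]
        unfold Vf
        rw [min_eq_right (by norm_num : (1:ℝ) - 1 ≤ 1)]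
        simp
      rcases hj0K with rfl | hjK2
      · rw [hVq0, zero_mul]
        apply le_of_eq
        apply Finset.sum_eq_zero
        intro i hi
        by_cases hi0 : i = 0
        · subst hi0; rw [hVq0, zero_mul]
        · rw [hrest0 t i hi hi0, mul_zero]
      · rw [hjK2, hVqK, zero_mul]
        apply le_of_eq
        apply Finset.sum_eq_zero
        intro i hi
        by_cases hiK : i = K
        · subst hiK; rw [hVqK, zero_mul]
        · rw [hrestK t i hi hiK, mul_zero]
  -- the per-step interior mass
  set I : ℕ → ℝ≥0∞ := fun t => ∑ j ∈ Finset.range (K+1),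
    (if 1 ≤ j ∧ j < K then u t j else 0) with hI
  have hFstep : ∀ t, F (t+1) + I t ≤ F t := by
    intro t
    have hF1 : F (t+1) = ∑ j ∈ Finset.range (K+1),
        ∑ i ∈ Finset.range (K+1), Vq i * μ (S t j i) := by
      rw [hF]
      simp only
      rw [Finset.sum_comm]
      apply Finset.sum_congr rfl
      intro i _
      rw [hdecomp2 t i, Finset.mul_sum]
    rw [hF1, hI]
    simp only
    rw [← Finset.sum_add_distrib]
    exact Finset.sum_le_sum (hstep t)
  have hind : ∀ N, F N + ∑ t ∈ Finset.range N, I t ≤ F 0 := by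
    intro N
    induction N with
    | zero => simp
    | succ n ih =>
        calc F (n+1) + ∑ t ∈ Finset.range (n+1), I t
            = (F (n+1) + I n) + ∑ t ∈ Finset.range n, I t := by
              rw [Finset.sum_range_succ]; ring
          _ ≤ F n + ∑ t ∈ Finset.range n, I t := add_le_add_left (hFstep n) _
          _ ≤ F 0 := ih
  have htsumI : ∑' t, I t ≤ F 0 := by
    rw [ENNReal.tsum_eq_iSup_nat]
    exact iSup_le fun N => le_trans le_add_self (hind N)
  -- value of F 0
  obtain ⟨k, hk2⟩ := hKeven
  have hkK : k ≤ K := by omega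
  have hkhalf : ((k:ℕ):ℝ)/K = 1/2 := by
    rw [hk2]
    push_cast
    rw [div_eq_iff (by exact_mod_cast (by omega : (k:ℕ) + k ≠ 0))]
    ring
  have hF0 : F 0 = Vq k * u 0 k := by
    rw [hF]
    simp only
    refine Finset.sum_eq_single_of_mem k (Finset.mem_range.mpr (by omega)) ?_
    intro j hj hjk
    have hEempty : E 0 j = ∅ := by
      ext ω
      simp only [hE, Set.mem_setOf_eq, Set.mem_empty_iff_false, iff_false]
      intro hcon
      rw [h0 ω] at hcon
      apply hjk
      apply hcastinj
      rw [← hcon, hkhalf]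
    have : u 0 j = 0 := by rw [hu]; simp only [hEempty]; exact measure_empty
    rw [this, mul_zero]
  have hFbound : F 0 ≤ ENNReal.ofReal (4 * (K:ℝ)^2 * Real.sqrt (1/2)) := by
    rw [hF0]
    calc Vq k * u 0 k ≤ Vq k * 1 := mul_le_mul_right prob_le_one _
      _ = Vq k := mul_one _
      _ ≤ ENNReal.ofReal (4 * (K:ℝ)^2 * Real.sqrt (1/2)) := by
          rw [hVq]
          simp only [hkhalf]
          apply ENNReal.ofReal_le_ofReal
          unfold Vf
          rw [show min (1/2:ℝ) (1 - 1/2) = 1/2 by norm_num]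
          have hs12 : (1/2:ℝ) ≤ Real.sqrt (1/2) := by
            nlinarith [Real.sq_sqrt (show (0:ℝ) ≤ 1/2 by norm_num),
              Real.sqrt_nonneg (1/2:ℝ)]
          nlinarith [sq_nonneg (K:ℝ)]
  -- bound μ (B t) by the interior mass I t
  have hμB : ∀ t, μ (B t) ≤ I t := by
    intro t
    have hsub : B t ⊆ ⋃ j ∈ (Finset.range (K+1)).filter (fun j => 1 ≤ j ∧ j < K), E t j := by
      intro ω hω
      simp only [hB, Set.mem_compl_iff, Set.mem_setOf_eq] at hω
      push_neg at hω
      obtain ⟨j, hj, hpj⟩ := hgrid t ω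
      have hj0 : j ≠ 0 := by
        intro hcon
        apply hω.1
        rw [hpj, hcon]
        simp
      have hjK2 : j ≠ K := by
        intro hcon
        apply hω.2
        rw [hpj, hcon, div_self hKne]
      exact Set.mem_biUnion
        (Finset.mem_filter.mpr ⟨Finset.mem_range.mpr (by omega), ⟨by omega, by omega⟩⟩) hpj
    calc μ (B t) ≤ μ (⋃ j ∈ (Finset.range (K+1)).filter (fun j => 1 ≤ j ∧ j < K), E t j) :=
          measure_mono hsub
      _ ≤ ∑ j ∈ (Finset.range (K+1)).filter (fun j => 1 ≤ j ∧ j < K), u t j :=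
          measure_biUnion_finset_le _ _
      _ = I t := by rw [hI]; simp only; rw [Finset.sum_filter]
  -- pointwise bound on T by sum of indicators
  have hTpt : ∀ ω, T ω ≤ ∑' t, (B t).indicator (fun _ => (1:ℝ≥0∞)) ω := by
    intro ω
    by_cases hex : ∃ n : ℕ, p n ω = 0 ∨ p n ω = 1
    · have hk' : T ω ≤ (Nat.find hex : ℝ≥0∞) := by
        rw [hT]
        exact sInf_le ⟨Nat.find hex, rfl, Nat.find_spec hex⟩
      refine le_trans hk' ?_
      have hone : ∀ t ∈ Finset.range (Nat.find hex),
          (B t).indicator (fun _ => (1:ℝ≥0∞)) ω = 1 := by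
        intro t ht
        have hωB : ω ∈ B t := by
          simp only [hB, Set.mem_compl_iff, Set.mem_setOf_eq]
          exact Nat.find_min hex (Finset.mem_range.mp ht)
        rw [Set.indicator_of_mem hωB]
      calc (Nat.find hex : ℝ≥0∞)
          = ∑ t ∈ Finset.range (Nat.find hex), (B t).indicator (fun _ => (1:ℝ≥0∞)) ω := by
            rw [Finset.sum_congr rfl hone]
            simp
        _ ≤ ∑' t, (B t).indicator (fun _ => (1:ℝ≥0∞)) ω := ENNReal.sum_le_tsum _
    · have hall : ∀ t, (B t).indicator (fun _ => (1:ℝ≥0∞)) ω = 1 := by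
        intro t
        have hωB : ω ∈ B t := by
          simp only [hB, Set.mem_compl_iff, Set.mem_setOf_eq]
          exact fun hcon => hex ⟨t, hcon⟩
        rw [Set.indicator_of_mem hωB]
      rw [tsum_congr hall]
      rw [ENNReal.tsum_const_eq_top_of_ne_zero one_ne_zero]
      exact le_top
  -- final chain
  calc ∫⁻ ω, T ω ∂μ
      ≤ ∫⁻ ω, ∑' t, (B t).indicator (fun _ => (1:ℝ≥0∞)) ω ∂μ := lintegral_mono hTpt
    _ = ∑' t, ∫⁻ ω, (B t).indicator (fun _ => (1:ℝ≥0∞)) ω ∂μ :=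
        lintegral_tsum fun t => ((measurable_one.indicator (hBmeas t)).aemeasurable)
    _ = ∑' t, μ (B t) := by
        apply tsum_congr
        intro t
        exact lintegral_indicator_one (hBmeas t)
    _ ≤ ∑' t, I t := ENNReal.tsum_le_tsum hμB
    _ ≤ F 0 := htsumI
    _ ≤ ENNReal.ofReal (4 * (K:ℝ)^2 * Real.sqrt (1/2)) := hFbound
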